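/- Let J ⊆ ℝ be an interval and let a, b : J → ℝ be differentiable with b(t) > 0 for all t ∈ J, satisfying a′(t) = (4/3)·a(t)² + 4·b(t)² and b′(t) = (16/3)·a(t)·b(t) on J. Then the function t ↦ (a(t)² − b(t)²)² / b(t) is constant on J; consequently each such solution lies on a quartic plane curve (a² − b²)² = λ³·b for some constant λ ≥ 0. -/

import Mathlib

/-- For a solution of `a′ = (4/3)a² + 4b²`, `b′ = (16/3)ab` with `b > 0` on an
interval `J`, the quantity `(a² − b²)²/b` is constant on `J`; hence the solution
lies on a quartic curve `(a² − b²)² = λ³·b` with `λ ≥ 0`. -/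
theorem first_integral_of_invariant_ode (J : Set ℝ) (hJ : J.OrdConnected)
    (a b : ℝ → ℝ) (hbpos : ∀ t ∈ J, 0 < b t)
    (ha : ∀ t ∈ J, HasDerivAt a ((4 / 3) * (a t) ^ 2 + 4 * (b t) ^ 2) t)
    (hb : ∀ t ∈ J, HasDerivAt b ((16 / 3) * a t * b t) t) :
    (∀ s ∈ J, ∀ t ∈ J,
      ((a s) ^ 2 - (b s) ^ 2) ^ 2 / b s = ((a t) ^ 2 - (b t) ^ 2) ^ 2 / b t) ∧
    ∃ lam : ℝ, 0 ≤ lam ∧ ∀ t ∈ J, ((a t) ^ 2 - (b t) ^ 2) ^ 2 = lam ^ 3 * b t := by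
  set F : ℝ → ℝ := fun t => ((a t) ^ 2 - (b t) ^ 2) ^ 2 / b t with hF
  have hF' : ∀ t ∈ J, HasDerivAt F 0 t := by
    intro t ht
    have hbne : b t ≠ 0 := (hbpos t ht).ne'
    have hnum : HasDerivAt (fun t => ((a t) ^ 2 - (b t) ^ 2) ^ 2)
        (2 * ((a t) ^ 2 - (b t) ^ 2) ^ 1 *
          (2 * (a t) ^ 1 * ((4 / 3) * (a t) ^ 2 + 4 * (b t) ^ 2)
            - 2 * (b t) ^ 1 * ((16 / 3) * a t * b t))) t := by
      exact (((ha t ht).pow 2).sub ((hb t ht).pow 2)).pow 2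
    have := hnum.div (hb t ht) hbne
    refine this.congr_deriv ?_
    rw [div_eq_iff (pow_ne_zero 2 hbne)]
    ring
  have hconv : Convex ℝ J := hJ.convex
  have hconst : ∀ s ∈ J, ∀ t ∈ J, F s = F t := by
    intro s hs t ht
    have := hconv.norm_image_sub_le_of_norm_hasDerivWithin_le
      (f := F) (f' := fun _ => (0 : ℝ)) (s := J) (C := 0)
      (fun x hx => (hF' x hx).hasDerivWithinAt)
      (fun x _ => by simp) hs ht
    simpa [sub_eq_zero, eq_comm] using this
  refine ⟨hconst, ?_⟩
  rcases Set.eq_empty_or_nonempty J with h | ⟨t0, ht0⟩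
  · exact ⟨0, le_rfl, by simp [h]⟩
  · set c : ℝ := F t0 with hc
    have hc0 : 0 ≤ c := div_nonneg (sq_nonneg _) (hbpos t0 ht0).le
    refine ⟨c ^ ((1 : ℝ) / 3), Real.rpow_nonneg hc0 _, ?_⟩
    intro t ht
    have hct : F t = c := (hconst t ht t0 ht0)
    have hbne : b t ≠ 0 := (hbpos t ht).ne'
    have hcube : (c ^ ((1 : ℝ) / 3)) ^ 3 = c := by
      rw [← Real.rpow_natCast (c ^ ((1 : ℝ) / 3)) 3, ← Real.rpow_mul hc0]
      norm_num
    rw [hcube]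
    have : ((a t) ^ 2 - (b t) ^ 2) ^ 2 / b t = c := hct
    field_simp at this
    linarith [this]
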